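/- For positive integers d and r, the polysymmetric complete homogeneous function has the power-sum expansion H_{d^r} = Σ_{τ ⊩ d} p^⊗_{τ^r} / z^⊗_τ, where the sum is over all types τ of weight d, τ^r scales every block multiplicity of τ by r, and z^⊗_τ = Π_{k≥1} z_{τ|_k}. -/

import Mathlib

open Classical

/- Polysymmetric setting: variables `x_{k,j}` indexed by `(k, j) : ℕ+ × ℕ` with
`deg x_{k,j} = k`.  A type is a multiset of blocks `(k, m) : ℕ+ × ℕ+` (degree `k`,
multiplicity `m`). -/

/-- Weighted degree of a monomial. -/
noncomputable def wdeg (e : ℕ+ × ℕ →₀ ℕ) : ℕ := e.sum fun v m => (v.1 : ℕ) * m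

/-- `H_d`: the sum of all distinct monomials of weighted degree `d`. -/
noncomputable def HH (d : ℕ) : MvPowerSeries (ℕ+ × ℕ) ℚ :=
  fun e => if wdeg e = d then 1 else 0

/-- Substitution of every variable by its `r`-th power. -/
noncomputable def powSub (r : ℕ) (f : MvPowerSeries (ℕ+ × ℕ) ℚ) :
    MvPowerSeries (ℕ+ × ℕ) ℚ :=
  fun e => if ∀ v, r ∣ e v then f (e.mapRange (· / r) (Nat.zero_div r)) else 0

/-- `p_n(x_{k*}) = Σ_{j≥1} x_{k,j}^n`. -/
noncomputable def pIn (k : ℕ+) (n : ℕ) : MvPowerSeries (ℕ+ × ℕ) ℚ :=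
  fun e => if ∃ j, e = Finsupp.single (k, j) n then 1 else 0

/-- The weight of a type: `Σ` over blocks of (degree × multiplicity). -/
noncomputable def wtT (τ : Multiset (ℕ+ × ℕ+)) : ℕ :=
  (τ.map fun b => (b.1 : ℕ) * (b.2 : ℕ)).sum

/-- `τ|_k`: the partition formed by the multiplicities of the degree-`k` blocks of `τ`. -/
noncomputable def restrict (τ : Multiset (ℕ+ × ℕ+)) (k : ℕ+) : Multiset ℕ :=
  (τ.filter fun b => b.1 = k).map fun b => (b.2 : ℕ)

/-- `z_λ = Π_i i^{m_i(λ)} m_i(λ)!`. -/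
noncomputable def zMult (lam : Multiset ℕ) : ℚ :=
  ∏ i ∈ lam.toFinset, (i : ℚ) ^ lam.count i * (Nat.factorial (lam.count i) : ℚ)

/-- `z^⊗_τ = Π_{k≥1} z_{τ|_k}`. -/
noncomputable def zT (τ : Multiset (ℕ+ × ℕ+)) : ℚ :=
  ∏ᶠ k : ℕ+, zMult (restrict τ k)

/-- `p^⊗_{τ^r} = Π_{k≥1} p_{r·(τ|_k)}(x_{k*})`: the pure tensor power sum of the
type `τ^r` obtained from `τ` by scaling every block multiplicity by `r`. -/
noncomputable def pTr (τ : Multiset (ℕ+ × ℕ+)) (r : ℕ) : MvPowerSeries (ℕ+ × ℕ) ℚ :=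
  ∏ᶠ k : ℕ+, ((restrict τ k).map fun m => pIn k (r * m)).prod

-- basic wdeg lemmas
lemma wdeg_add (a b : ℕ+ × ℕ →₀ ℕ) : wdeg (a + b) = wdeg a + wdeg b := by
  unfold wdeg
  rw [Finsupp.sum_add_index']
  · intro v; exact (Nat.mul_zero _)
  · intro v x y; exact Nat.mul_add _ _ _

lemma wdeg_single (v : ℕ+ × ℕ) (m : ℕ) : wdeg (Finsupp.single v m) = (v.1 : ℕ) * m := by
  unfold wdeg
  rw [Finsupp.sum_single_index]
  exact Nat.mul_zero _

lemma wdeg_sub {s e : ℕ+ × ℕ →₀ ℕ} (h : s ≤ e) :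
    wdeg (e - s) = wdeg e - wdeg s ∧ wdeg s ≤ wdeg e := by
  have he : (e - s) + s = e := tsub_add_cancel_of_le h
  have : wdeg (e - s) + wdeg s = wdeg e := by rw [← wdeg_add, he]
  constructor
  · omega
  · omega

lemma wdeg_eq_zero {e : ℕ+ × ℕ →₀ ℕ} (h : wdeg e = 0) : e = 0 := by
  ext v
  by_contra hv
  have hv' : v ∈ e.support := Finsupp.mem_support_iff.mpr (by simpa using hv)
  have : (v.1 : ℕ) * e v ≤ wdeg e := Finset.single_le_sum (f := fun v => (v.1 : ℕ) * e v)
    (fun _ _ => Nat.zero_le _) hv'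
  have h1 : 0 < (v.1 : ℕ) * e v := Nat.mul_pos v.1.pos (Nat.pos_of_ne_zero (by simpa using hv))
  omega

lemma wdeg_support_le {e : ℕ+ × ℕ →₀ ℕ} {v : ℕ+ × ℕ} (hv : v ∈ e.support) :
    (v.1 : ℕ) * e v ≤ wdeg e :=
  Finset.single_le_sum (f := fun v => (v.1 : ℕ) * e v) (fun _ _ => Nat.zero_le _) hv

noncomputable def Jfin (k : ℕ+) (m : ℕ) (e : ℕ+ × ℕ →₀ ℕ) : Finset ℕ :=
  (e.support.filter fun v => v.1 = k ∧ m ≤ e v).image Prod.snd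

lemma mem_Jfin {k : ℕ+} {m : ℕ} (hm : 0 < m) {e : ℕ+ × ℕ →₀ ℕ} {j : ℕ} :
    j ∈ Jfin k m e ↔ m ≤ e (k, j) := by
  unfold Jfin
  simp only [Finset.mem_image, Finset.mem_filter, Finsupp.mem_support_iff]
  constructor
  · rintro ⟨v, ⟨-, h1, h2⟩, rfl⟩
    have : v = (k, v.2) := by cases v; simp_all
    rwa [← this]
  · intro h
    exact ⟨(k, j), ⟨by omega, rfl, h⟩, rfl⟩

lemma coeff_pIn_mul (k : ℕ+) (m : ℕ) (hm : 0 < m) (g : MvPowerSeries (ℕ+ × ℕ) ℚ)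
    (e : ℕ+ × ℕ →₀ ℕ) :
    (pIn k m * g) e = ∑ j ∈ Jfin k m e, g (e - Finsupp.single (k, j) m) := by
  have hc : (pIn k m * g) e = MvPowerSeries.coeff e (pIn k m * g) := rfl
  rw [hc, MvPowerSeries.coeff_mul]
  refine (Finset.sum_bij_ne_zero
    (i := fun j _ _ => (Finsupp.single (k, j) m, e - Finsupp.single (k, j) m))
    ?_ ?_ ?_ ?_).symm
  · intro j hj _
    rw [Finset.HasAntidiagonal.mem_antidiagonal]
    exact add_tsub_cancel_of_le (Finsupp.single_le_iff.mpr ((mem_Jfin hm).mp hj))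
  · intro a _ _ b _ _ heq
    have h2 : ((k, a) : ℕ+ × ℕ) = (k, b) :=
      Finsupp.single_left_injective (by omega) (congrArg Prod.fst heq)
    simpa using h2
  · rintro ⟨a, b⟩ hp hne
    rw [Finset.HasAntidiagonal.mem_antidiagonal] at hp
    have h2 : ∃ j, a = Finsupp.single (k, j) m := by
      by_contra h
      exact hne (by simp [pIn, MvPowerSeries.coeff_apply, h])
    obtain ⟨j, rfl⟩ := h2
    have hb : b = e - Finsupp.single (k, j) m := eq_tsub_of_add_eq (by rw [add_comm]; exact hp)
    subst hb
    have hle : Finsupp.single (k, j) m ≤ e := le_of_add_le_left hp.le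
    refine ⟨j, (mem_Jfin hm).mpr (Finsupp.single_le_iff.mp hle), ?_, rfl⟩
    intro h0
    exact hne (mul_eq_zero_of_right _ (by rw [MvPowerSeries.coeff_apply]; exact h0))
  · intro j hj _
    have : (MvPowerSeries.coeff (Finsupp.single (k, j) m)) (pIn k m) = 1 := by
      rw [MvPowerSeries.coeff_apply]
      simp only [pIn]
      rw [if_pos ⟨j, rfl⟩]
    rw [this, one_mul, MvPowerSeries.coeff_apply]

noncomputable def Bfin (d : ℕ) : Finset (ℕ+ × ℕ+) :=
  (Finset.Icc 1 d.toPNat' ×ˢ Finset.Icc 1 d.toPNat').filter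
    fun b => (b.1 : ℕ) * (b.2 : ℕ) ≤ d

lemma mem_Bfin {d : ℕ} (hd : 0 < d) {b : ℕ+ × ℕ+} :
    b ∈ Bfin d ↔ (b.1 : ℕ) * (b.2 : ℕ) ≤ d := by
  have hc : (d.toPNat' : ℕ) = d := PNat.toPNat'_coe hd
  unfold Bfin
  simp only [Finset.mem_filter, Finset.mem_product, Finset.mem_Icc, and_iff_right_iff_imp]
  intro h
  have h1 : (b.1 : ℕ) ≤ d := le_trans (Nat.le_mul_of_pos_right _ b.2.pos) h
  have h2 : (b.2 : ℕ) ≤ d := le_trans (Nat.le_mul_of_pos_left _ b.1.pos) h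
  refine ⟨⟨b.1.one_le, ?_⟩, b.2.one_le, ?_⟩ <;>
    · rw [← PNat.coe_le_coe, hc]; assumption

lemma HH_rec (d : ℕ) (hd : 0 < d) :
    (d : ℚ) • HH d
      = ∑ b ∈ Bfin d, (b.1 : ℚ) • (pIn b.1 b.2 * HH (d - (b.1 : ℕ) * (b.2 : ℕ))) := by
  funext e
  have hL : ((d : ℚ) • HH d) e = (d : ℚ) * (if wdeg e = d then 1 else 0) := rfl
  have hR : (∑ b ∈ Bfin d, (b.1 : ℚ) • (pIn b.1 b.2 * HH (d - (b.1 : ℕ) * (b.2 : ℕ)))) e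
      = ∑ b ∈ Bfin d, (b.1 : ℚ) *
          ((pIn b.1 b.2 * HH (d - (b.1 : ℕ) * (b.2 : ℕ))) e) := by
    exact map_sum (MvPowerSeries.coeff e)
      (fun b : ℕ+ × ℕ+ => (b.1 : ℚ) • (pIn b.1 b.2 * HH (d - (b.1 : ℕ) * (b.2 : ℕ)))) (Bfin d)
  rw [hL, hR]
  have key : ∀ b ∈ Bfin d, (pIn b.1 b.2 * HH (d - (b.1 : ℕ) * (b.2 : ℕ))) e
      = ∑ j ∈ Jfin b.1 (b.2 : ℕ) e,
          (if wdeg e = d then (1 : ℚ) else 0) := by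
    intro b hb
    rw [coeff_pIn_mul _ _ b.2.pos]
    refine Finset.sum_congr rfl fun j hj => ?_
    have hle : Finsupp.single (b.1, j) (b.2 : ℕ) ≤ e :=
      Finsupp.single_le_iff.mpr ((mem_Jfin b.2.pos).mp hj)
    have hw := wdeg_sub hle
    have hws : wdeg (Finsupp.single ((b.1 : ℕ+), j) (b.2 : ℕ)) = (b.1 : ℕ) * (b.2 : ℕ) :=
      wdeg_single _ _
    have hkm : (b.1 : ℕ) * (b.2 : ℕ) ≤ d := (mem_Bfin hd).mp hb
    show (if wdeg (e - Finsupp.single (b.1, j) (b.2 : ℕ)) = d - (b.1 : ℕ) * (b.2 : ℕ)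
      then (1:ℚ) else 0) = _
    rw [hws] at hw
    by_cases he : wdeg e = d
    · rw [if_pos (by omega), if_pos he]
    · rw [if_neg (by omega), if_neg he]
  rw [Finset.sum_congr rfl fun b hb => by rw [key b hb]]
  by_cases he : wdeg e = d
  · rw [if_pos he, mul_one]
    have step : (∑ b ∈ Bfin d, (b.1 : ℚ) * ∑ _j ∈ Jfin b.1 (b.2 : ℕ) e, (1:ℚ))
        = ∑ b ∈ Bfin d, (b.1 : ℚ) * ((Jfin b.1 (b.2 : ℕ) e).card : ℚ) := by
      refine Finset.sum_congr rfl fun b _ => ?_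
      rw [Finset.sum_const, nsmul_eq_mul, mul_one]
    rw [step]
    have card_J : ∀ b : ℕ+ × ℕ+, (Jfin b.1 (b.2 : ℕ) e).card
        = (e.support.filter fun v => v.1 = b.1 ∧ (b.2 : ℕ) ≤ e v).card := by
      intro b
      apply Finset.card_image_of_injOn
      intro v hv w hw hvw
      simp only [Finset.mem_coe, Finset.mem_filter] at hv hw
      exact Prod.ext (hv.2.1.trans hw.2.1.symm) hvw
    calc (d : ℚ) = ∑ v ∈ e.support, (v.1 : ℚ) * (e v : ℚ) := by
          rw [← he]
          unfold wdeg
          rw [Finsupp.sum]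
          push_cast
          rfl
      _ = ∑ v ∈ e.support, ∑ b ∈ Bfin d,
            (if v.1 = b.1 ∧ (b.2 : ℕ) ≤ e v then (v.1 : ℚ) else 0) := by
          refine Finset.sum_congr rfl fun v hv => ?_
          have hvd : (v.1 : ℕ) * e v ≤ d := he ▸ wdeg_support_le hv
          rw [← Finset.sum_filter, Finset.sum_const]
          have hcard : ((Bfin d).filter fun b => v.1 = b.1 ∧ (b.2 : ℕ) ≤ e v).card
              = (Finset.Icc 1 (e v)).card := by
            apply Finset.card_nbij' (fun b => (b.2 : ℕ)) (fun n => (v.1, n.toPNat'))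
            · intro b hb
              rw [Finset.mem_coe, Finset.mem_filter] at hb
              exact Finset.mem_Icc.mpr ⟨b.2.one_le, hb.2.2⟩
            · intro n hn
              rw [Finset.mem_coe, Finset.mem_Icc] at hn
              rw [Finset.mem_coe]
              have hn1 : 0 < n := hn.1
              have hcn : (n.toPNat' : ℕ) = n := PNat.toPNat'_coe hn1
              refine Finset.mem_filter.mpr ⟨(mem_Bfin hd).mpr ?_, rfl, by rw [hcn]; exact hn.2⟩
              rw [hcn]
              calc (v.1 : ℕ) * n ≤ (v.1 : ℕ) * e v := Nat.mul_le_mul_left _ hn.2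
                _ ≤ d := hvd
            · intro b hb
              rw [Finset.mem_coe, Finset.mem_filter] at hb
              exact Prod.ext hb.2.1 (PNat.coe_toPNat' b.2)
            · intro n hn
              rw [Finset.mem_coe, Finset.mem_Icc] at hn
              exact PNat.toPNat'_coe hn.1
          rw [hcard, Nat.card_Icc, Nat.add_sub_cancel, nsmul_eq_mul, mul_comm]
      _ = ∑ b ∈ Bfin d, (b.1 : ℚ) * ((Jfin b.1 (b.2 : ℕ) e).card : ℚ) := by
          rw [Finset.sum_comm]
          refine Finset.sum_congr rfl fun b hb => ?_
          rw [card_J b, Finset.card_filter]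
          push_cast
          rw [Finset.mul_sum]
          refine Finset.sum_congr rfl fun v hv => ?_
          by_cases h : v.1 = b.1 ∧ (b.2 : ℕ) ≤ e v
          · rw [if_pos h, if_pos h, mul_one, h.1]
          · rw [if_neg h, if_neg h, mul_zero]
  · rw [if_neg he, mul_zero]
    symm
    refine Finset.sum_eq_zero fun b _ => ?_
    rw [Finset.sum_const_zero, mul_zero]

lemma wtT_zero : wtT 0 = 0 := rfl

lemma wtT_cons (b : ℕ+ × ℕ+) (τ : Multiset (ℕ+ × ℕ+)) :
    wtT (b ::ₘ τ) = (b.1 : ℕ) * (b.2 : ℕ) + wtT τ := by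
  unfold wtT; rw [Multiset.map_cons, Multiset.sum_cons]

lemma restrict_zero (k : ℕ+) : restrict 0 k = 0 := rfl

lemma restrict_cons (b : ℕ+ × ℕ+) (τ : Multiset (ℕ+ × ℕ+)) (k : ℕ+) :
    restrict (b ::ₘ τ) k
      = if b.1 = k then ((b.2 : ℕ) ::ₘ restrict τ k) else restrict τ k := by
  unfold restrict
  rw [Multiset.filter_cons]
  by_cases h : b.1 = k
  · rw [if_pos h, if_pos h, Multiset.map_add, Multiset.map_singleton, Multiset.singleton_add]
  · rw [if_neg h, if_neg h, Multiset.map_add, Multiset.map_zero, zero_add]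

lemma count_restrict (τ : Multiset (ℕ+ × ℕ+)) (b : ℕ+ × ℕ+) :
    (restrict τ b.1).count (b.2 : ℕ) = τ.count b := by
  unfold restrict
  rw [Multiset.count_map, Multiset.filter_filter, Multiset.count_eq_card_filter_eq]
  congr 1
  apply Multiset.filter_congr
  intro x _
  constructor
  · rintro ⟨h2, h1⟩
    have : b.2 = x.2 := PNat.coe_injective h2
    exact Prod.ext h1.symm this
  · rintro rfl; exact ⟨rfl, rfl⟩

lemma zMult_zero : zMult 0 = 1 := by
  unfold zMult; rw [Multiset.toFinset_zero, Finset.prod_empty]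

lemma zMult_cons (m : ℕ) (lam : Multiset ℕ) :
    zMult (m ::ₘ lam) = (m : ℚ) * ((lam.count m : ℚ) + 1) * zMult lam := by
  classical
  have hsub1 : (m ::ₘ lam).toFinset ⊆ insert m lam.toFinset := by
    rw [Multiset.toFinset_cons]
  have hsub2 : lam.toFinset ⊆ insert m lam.toFinset := Finset.subset_insert _ _
  have gen : ∀ (μ : Multiset ℕ) (s : Finset ℕ), μ.toFinset ⊆ s →
      zMult μ = ∏ i ∈ s, (i : ℚ) ^ μ.count i * (Nat.factorial (μ.count i) : ℚ) := by
    intro μ s hs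
    unfold zMult
    refine Finset.prod_subset hs fun i _ hi => ?_
    rw [Multiset.count_eq_zero_of_notMem (fun h => hi (Multiset.mem_toFinset.mpr h))]
    simp [Nat.factorial]
  rw [gen _ _ hsub1, gen lam _ hsub2]
  set s := insert m lam.toFinset with hs
  have hm : m ∈ s := Finset.mem_insert_self _ _
  rw [← Finset.mul_prod_erase s _ hm, ← Finset.mul_prod_erase s
    (fun i => (i : ℚ) ^ lam.count i * (Nat.factorial (lam.count i) : ℚ)) hm]
  have hcount : ∀ i ∈ s.erase m, (m ::ₘ lam).count i = lam.count i := by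
    intro i hi
    rw [Multiset.count_cons, if_neg (Finset.ne_of_mem_erase hi), Nat.add_zero]
  rw [Finset.prod_congr rfl fun i hi => by rw [hcount i hi]]
  have hcm : (m ::ₘ lam).count m = lam.count m + 1 := by
    rw [Multiset.count_cons, if_pos rfl]
  rw [hcm, pow_succ, Nat.factorial_succ]
  push_cast
  ring

lemma zT_zero : zT 0 = 1 := by
  unfold zT
  simp [restrict_zero, zMult_zero]

lemma restrict_eq_zero_of_not_mem {τ : Multiset (ℕ+ × ℕ+)} {k : ℕ+}
    (h : k ∉ τ.toFinset.image Prod.fst) : restrict τ k = 0 := by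
  unfold restrict
  rw [Multiset.filter_eq_nil.mpr, Multiset.map_zero]
  intro b hb hbk
  exact h (Finset.mem_image.mpr ⟨b, Multiset.mem_toFinset.mpr hb, hbk⟩)

lemma zT_cons (b : ℕ+ × ℕ+) (τ : Multiset (ℕ+ × ℕ+)) :
    zT (b ::ₘ τ) = (b.2 : ℚ) * ((τ.count b : ℚ) + 1) * zT τ := by
  unfold zT
  have hfac : ∀ k : ℕ+, zMult (restrict (b ::ₘ τ) k)
      = (if k = b.1 then (b.2 : ℚ) * ((τ.count b : ℚ) + 1) else 1) * zMult (restrict τ k) := by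
    intro k
    rw [restrict_cons]
    by_cases h : b.1 = k
    · rw [if_pos h, if_pos h.symm, zMult_cons]
      subst h
      rw [count_restrict]
    · rw [if_neg h, if_neg (fun hh => h hh.symm), one_mul]
  rw [finprod_congr hfac]
  have hfin1 : (Function.mulSupport fun k : ℕ+ =>
      (if k = b.1 then (b.2 : ℚ) * ((τ.count b : ℚ) + 1) else 1)).Finite := by
    apply Set.Finite.subset (Set.finite_singleton b.1)
    intro k hk
    by_contra hkb
    exact hk (if_neg hkb)
  have hfin2 : (Function.mulSupport fun k : ℕ+ => zMult (restrict τ k)).Finite := by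
    apply Set.Finite.subset (τ.toFinset.image Prod.fst).finite_toSet
    intro k hk
    by_contra hkb
    exact hk (show zMult (restrict τ k) = 1 by rw [restrict_eq_zero_of_not_mem hkb, zMult_zero])
  rw [finprod_mul_distrib hfin1 hfin2]
  congr 1
  rw [finprod_eq_single _ b.1 (fun k hk => if_neg hk), if_pos rfl]

lemma zT_pos (τ : Multiset (ℕ+ × ℕ+)) : 0 < zT τ := by
  induction τ using Multiset.induction_on with
  | empty => rw [zT_zero]; norm_num
  | cons b τ ih =>
    rw [zT_cons]
    have h1 : (0:ℚ) < (b.2 : ℚ) := by exact_mod_cast b.2.pos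
    positivity

lemma pTr_zero (r : ℕ) : pTr 0 r = 1 := by
  unfold pTr
  simp [restrict_zero]

lemma pTr_cons (b : ℕ+ × ℕ+) (τ : Multiset (ℕ+ × ℕ+)) (r : ℕ) :
    pTr (b ::ₘ τ) r = pIn b.1 (r * (b.2 : ℕ)) * pTr τ r := by
  unfold pTr
  have hfac : ∀ k : ℕ+, ((restrict (b ::ₘ τ) k).map fun m => pIn k (r * m)).prod
      = (if k = b.1 then pIn b.1 (r * (b.2 : ℕ)) else 1)
        * ((restrict τ k).map fun m => pIn k (r * m)).prod := by
    intro k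
    rw [restrict_cons]
    by_cases h : b.1 = k
    · rw [if_pos h, if_pos h.symm, Multiset.map_cons, Multiset.prod_cons]
      subst h
      rfl
    · rw [if_neg h, if_neg (fun hh => h hh.symm), one_mul]
  rw [finprod_congr hfac]
  have hfin1 : (Function.mulSupport fun k : ℕ+ =>
      (if k = b.1 then pIn b.1 (r * (b.2 : ℕ)) else 1)).Finite := by
    apply Set.Finite.subset (Set.finite_singleton b.1)
    intro k hk
    by_contra hkb
    exact hk (if_neg hkb)
  have hfin2 : (Function.mulSupport fun k : ℕ+ =>
      ((restrict τ k).map fun m => pIn k (r * m)).prod).Finite := by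
    apply Set.Finite.subset (τ.toFinset.image Prod.fst).finite_toSet
    intro k hk
    by_contra hkb
    exact hk (show ((restrict τ k).map fun m => pIn k (r * m)).prod = 1 by
      rw [restrict_eq_zero_of_not_mem hkb, Multiset.map_zero, Multiset.prod_zero])
  rw [finprod_mul_distrib hfin1 hfin2]
  congr 1
  rw [finprod_eq_single _ b.1 (fun k hk => if_neg hk), if_pos rfl]

section powSub
variable {r : ℕ} (hr : 0 < r)

lemma divR_smul {e : ℕ+ × ℕ →₀ ℕ} (he : ∀ v, r ∣ e v) :
    r • (e.mapRange (· / r) (Nat.zero_div r)) = e := by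
  ext v
  rw [Finsupp.smul_apply, Finsupp.mapRange_apply, smul_eq_mul]
  exact Nat.mul_div_cancel' (he v)

include hr

lemma smul_divR (a : ℕ+ × ℕ →₀ ℕ) :
    (r • a).mapRange (· / r) (Nat.zero_div r) = a := by
  ext v
  rw [Finsupp.mapRange_apply, Finsupp.smul_apply, smul_eq_mul]
  exact Nat.mul_div_cancel_left _ hr

lemma powSub_one : powSub r 1 = 1 := by
  funext e
  show (if ∀ v, r ∣ e v then (1 : MvPowerSeries (ℕ+ × ℕ) ℚ) (e.mapRange _ _) else 0) = _
  have h1 : ∀ (a : ℕ+ × ℕ →₀ ℕ), (1 : MvPowerSeries (ℕ+ × ℕ) ℚ) a = if a = 0 then 1 else 0 :=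
    fun a => by
      rw [show (1 : MvPowerSeries (ℕ+ × ℕ) ℚ) a = MvPowerSeries.coeff a 1 from rfl,
        MvPowerSeries.coeff_one]
  rw [h1]
  by_cases he : ∀ v, r ∣ e v
  · rw [if_pos he, h1 e]
    refine if_congr ?_ rfl rfl
    constructor
    · intro h
      have h2 := divR_smul he
      rw [h, smul_zero] at h2
      exact h2.symm
    · rintro rfl
      ext v
      simp
  · rw [if_neg he, h1 e, if_neg (fun h => he (by rw [h]; intro v; simp))]

lemma powSub_mul (f g : MvPowerSeries (ℕ+ × ℕ) ℚ) :
    powSub r (f * g) = powSub r f * powSub r g := by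
  funext e
  show (if ∀ v, r ∣ e v then (f * g) (e.mapRange _ _) else 0)
      = MvPowerSeries.coeff e (powSub r f * powSub r g)
  rw [MvPowerSeries.coeff_mul]
  by_cases he : ∀ v, r ∣ e v
  · rw [if_pos he]
    have hfg : (f * g) (e.mapRange (· / r) (Nat.zero_div r))
        = ∑ p ∈ Finset.HasAntidiagonal.antidiagonal (e.mapRange (· / r) (Nat.zero_div r)),
            f p.1 * g p.2 := by
      rw [show (f * g) (e.mapRange (· / r) (Nat.zero_div r))
        = MvPowerSeries.coeff _ (f * g) from rfl, MvPowerSeries.coeff_mul]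
      rfl
    rw [hfg]
    refine Finset.sum_bij_ne_zero (i := fun p _ _ => (r • p.1, r • p.2)) ?_ ?_ ?_ ?_
    · intro p hp _
      rw [Finset.HasAntidiagonal.mem_antidiagonal] at hp ⊢
      rw [← smul_add, hp, divR_smul he]
    · intro p _ _ q _ _ heq
      have h1 := congrArg Prod.fst heq
      have h2 := congrArg Prod.snd heq
      simp only at h1 h2
      have e1 : p.1 = q.1 := by
        have h3 : Finsupp.mapRange (· / r) (Nat.zero_div r) (r • p.1)
            = Finsupp.mapRange (· / r) (Nat.zero_div r) (r • q.1) := by rw [h1]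
        rwa [smul_divR hr, smul_divR hr] at h3
      have e2 : p.2 = q.2 := by
        have h3 : Finsupp.mapRange (· / r) (Nat.zero_div r) (r • p.2)
            = Finsupp.mapRange (· / r) (Nat.zero_div r) (r • q.2) := by rw [h2]
        rwa [smul_divR hr, smul_divR hr] at h3
      exact Prod.ext e1 e2
    · rintro ⟨a, b⟩ hp hne
      rw [Finset.HasAntidiagonal.mem_antidiagonal] at hp
      have ha : ∀ v, r ∣ a v := by
        by_contra h
        refine hne (mul_eq_zero_of_left ?_ _)
        show powSub r f a = 0
        unfold powSub
        rw [if_neg h]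
      have hb : ∀ v, r ∣ b v := by
        by_contra h
        refine hne (mul_eq_zero_of_right _ ?_)
        show powSub r g b = 0
        unfold powSub
        rw [if_neg h]
      refine ⟨(a.mapRange (· / r) (Nat.zero_div r), b.mapRange (· / r) (Nat.zero_div r)),
        ?_, ?_, ?_⟩
      · rw [Finset.HasAntidiagonal.mem_antidiagonal]
        ext v
        simp only [Finsupp.add_apply, Finsupp.mapRange_apply]
        rw [← hp]
        simp only [Finsupp.add_apply]
        exact (Nat.add_div_of_dvd_right (ha v)).symm
      · intro h0
        refine hne ?_
        have hG : MvPowerSeries.coeff a (powSub r f) * MvPowerSeries.coeff b (powSub r g)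
            = f (a.mapRange (· / r) (Nat.zero_div r)) * g (b.mapRange (· / r) (Nat.zero_div r)) := by
          show powSub r f a * powSub r g b = _
          unfold powSub
          rw [if_pos ha, if_pos hb]
        exact hG.trans h0
      · show ((r • _ : ℕ+ × ℕ →₀ ℕ), (r • _ : ℕ+ × ℕ →₀ ℕ)) = (a, b)
        rw [divR_smul ha, divR_smul hb]
    · intro p hp hne
      have hd : ∀ (c : ℕ+ × ℕ →₀ ℕ) (v : ℕ+ × ℕ), r ∣ (r • c) v := by
        intro c v
        rw [Finsupp.smul_apply, smul_eq_mul]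
        exact Dvd.intro _ rfl
      show f p.1 * g p.2 = powSub r f (r • p.1) * powSub r g (r • p.2)
      unfold powSub
      rw [if_pos (hd p.1), if_pos (hd p.2), smul_divR hr, smul_divR hr]
  · rw [if_neg he]
    symm
    refine Finset.sum_eq_zero fun p hp => ?_
    rw [Finset.HasAntidiagonal.mem_antidiagonal] at hp
    by_cases h1 : ∀ v, r ∣ p.1 v
    · have h2 : ¬ ∀ v, r ∣ p.2 v := by
        intro h2
        refine he fun v => ?_
        have := dvd_add (h1 v) (h2 v)
        rwa [← Finsupp.add_apply, hp] at this
      refine mul_eq_zero_of_right _ ?_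
      show powSub r g p.2 = 0
      unfold powSub
      rw [if_neg h2]
    · refine mul_eq_zero_of_left ?_ _
      show powSub r f p.1 = 0
      unfold powSub
      rw [if_neg h1]

lemma powSub_pIn (k : ℕ+) (m : ℕ) : powSub r (pIn k m) = pIn k (r * m) := by
  funext e
  show (if ∀ v, r ∣ e v then pIn k m (e.mapRange _ _) else 0)
      = (if ∃ j, e = Finsupp.single (k, j) (r * m) then 1 else 0)
  by_cases he : ∀ v, r ∣ e v
  · rw [if_pos he]
    show (if ∃ j, e.mapRange _ _ = Finsupp.single (k, j) m then (1:ℚ) else 0) = _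
    refine if_congr ?_ rfl rfl
    constructor
    · rintro ⟨j, hj⟩
      refine ⟨j, ?_⟩
      have h2 := divR_smul he
      rw [hj, Finsupp.smul_single, smul_eq_mul] at h2
      exact h2.symm
    · rintro ⟨j, rfl⟩
      refine ⟨j, ?_⟩
      rw [Finsupp.mapRange_single]
      simp [Nat.mul_div_cancel_left _ hr]
  · rw [if_neg he, if_neg]
    rintro ⟨j, rfl⟩
    apply he
    intro v
    rw [Finsupp.single_apply]
    split
    · exact Dvd.intro _ rfl
    · exact dvd_zero _
end powSub

lemma card_le_wtT (τ : Multiset (ℕ+ × ℕ+)) : Multiset.card τ ≤ wtT τ := by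
  induction τ using Multiset.induction_on with
  | empty => simp [wtT]
  | cons b τ ih =>
    rw [Multiset.card_cons, wtT_cons]
    have : 1 ≤ (b.1 : ℕ) * (b.2 : ℕ) := Nat.one_le_iff_ne_zero.mpr
      (Nat.mul_ne_zero b.1.pos.ne' b.2.pos.ne')
    omega

lemma mem_wt_le {b : ℕ+ × ℕ+} {τ : Multiset (ℕ+ × ℕ+)} (hb : b ∈ τ) :
    (b.1 : ℕ) * (b.2 : ℕ) ≤ wtT τ := by
  conv_rhs => rw [← Multiset.cons_erase hb]
  rw [wtT_cons]
  exact Nat.le_add_right _ _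

lemma wtT_eq_zero {τ : Multiset (ℕ+ × ℕ+)} (h : wtT τ = 0) : τ = 0 := by
  by_contra hne
  obtain ⟨b, hb⟩ := Multiset.exists_mem_of_ne_zero hne
  have h1 := mem_wt_le hb
  have : 1 ≤ (b.1 : ℕ) * (b.2 : ℕ) := Nat.one_le_iff_ne_zero.mpr
    (Nat.mul_ne_zero b.1.pos.ne' b.2.pos.ne')
  omega

lemma Tfinite (d : ℕ) : {τ : Multiset (ℕ+ × ℕ+) | wtT τ = d}.Finite := by
  rcases Nat.eq_zero_or_pos d with rfl | hd
  · apply Set.Finite.subset (Set.finite_singleton 0)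
    intro τ hτ
    exact wtT_eq_zero hτ
  · apply Set.Finite.subset ((d • (Bfin d).val).powerset.toFinset.finite_toSet)
    intro τ hτ
    simp only [Set.mem_setOf_eq] at hτ
    simp only [Finset.mem_coe, Multiset.mem_toFinset, Multiset.mem_powerset]
    rw [Multiset.le_iff_count]
    intro b
    by_cases hb : b ∈ τ
    · have h1 : (b.1 : ℕ) * (b.2 : ℕ) ≤ d := hτ ▸ mem_wt_le hb
      have h2 : b ∈ Bfin d := (mem_Bfin hd).mpr h1
      have h3 : 0 < (Bfin d).val.count b := Multiset.count_pos.mpr h2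
      have h4 : τ.count b ≤ d := le_trans (Multiset.count_le_card _ _) (hτ ▸ card_le_wtT τ)
      rw [Multiset.count_nsmul]
      calc τ.count b ≤ d := h4
        _ ≤ d * (Bfin d).val.count b := Nat.le_mul_of_pos_right _ h3
    · rw [Multiset.count_eq_zero_of_notMem hb]
      exact Nat.zero_le _

noncomputable def Tfin (d : ℕ) : Finset (Multiset (ℕ+ × ℕ+)) := (Tfinite d).toFinset

lemma mem_Tfin {d : ℕ} {τ : Multiset (ℕ+ × ℕ+)} : τ ∈ Tfin d ↔ wtT τ = d :=
  Set.Finite.mem_toFinset _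

lemma key_sum (d : ℕ) (hd : 0 < d) :
    ∑ b ∈ Bfin d, (b.1 : ℚ) •
        (pIn b.1 b.2 * ∑ σ ∈ Tfin (d - (b.1 : ℕ) * (b.2 : ℕ)), (zT σ)⁻¹ • pTr σ 1)
      = (d : ℚ) • ∑ τ ∈ Tfin d, (zT τ)⁻¹ • pTr τ 1 := by
  have step1 : ∀ b ∈ Bfin d, (b.1 : ℚ) •
      (pIn b.1 b.2 * ∑ σ ∈ Tfin (d - (b.1 : ℕ) * (b.2 : ℕ)), (zT σ)⁻¹ • pTr σ 1)
      = ∑ σ ∈ Tfin (d - (b.1 : ℕ) * (b.2 : ℕ)),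
          (b.1 : ℚ) • ((zT σ)⁻¹ • (pIn b.1 b.2 * pTr σ 1)) := by
    intro b _
    rw [Finset.mul_sum, Finset.smul_sum]
    refine Finset.sum_congr rfl fun σ _ => ?_
    rw [mul_smul_comm]
  rw [Finset.sum_congr rfl step1, Finset.sum_sigma']
  rw [Finset.smul_sum]
  have step2 : (∑ τ ∈ Tfin d, (d : ℚ) • ((zT τ)⁻¹ • pTr τ 1))
      = ∑ p ∈ (Tfin d).sigma (fun τ => τ.toFinset),
          (p.2.1 : ℚ) • ((zT (p.1.erase p.2))⁻¹ • (pIn p.2.1 p.2.2 * pTr (p.1.erase p.2) 1)) := by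
    rw [Finset.sum_sigma]
    refine Finset.sum_congr rfl fun τ hτ => ?_
    have hwt : wtT τ = d := mem_Tfin.mp hτ
    have inner : ∀ b ∈ τ.toFinset,
        (b.1 : ℚ) • ((zT (τ.erase b))⁻¹ • (pIn b.1 b.2 * pTr (τ.erase b) 1))
        = ((b.1 : ℚ) * (b.2 : ℚ) * (τ.count b : ℚ)) • ((zT τ)⁻¹ • pTr τ 1) := by
      intro b hb
      have hbτ : b ∈ τ := Multiset.mem_toFinset.mp hb
      have hP : pIn b.1 (b.2 : ℕ) * pTr (τ.erase b) 1 = pTr τ 1 := by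
        conv_rhs => rw [← Multiset.cons_erase hbτ]
        rw [pTr_cons, one_mul]
      have hz : zT τ = (b.2 : ℚ) * (((τ.erase b).count b : ℚ) + 1) * zT (τ.erase b) := by
        conv_lhs => rw [← Multiset.cons_erase hbτ]
        exact zT_cons b (τ.erase b)
      have hcnt : ((τ.erase b).count b : ℚ) + 1 = (τ.count b : ℚ) := by
        have : (τ.erase b).count b + 1 = τ.count b := by
          conv_rhs => rw [← Multiset.cons_erase hbτ]
          rw [Multiset.count_cons_self]
        exact_mod_cast this
      rw [hP, smul_smul, smul_smul]
      congr 1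
      rw [hz, hcnt]
      have h1 : (zT (τ.erase b)) ≠ 0 := (zT_pos _).ne'
      have h2 : ((b.2 : ℚ)) ≠ 0 := by
        have := b.2.pos
        positivity
      have h3 : (τ.count b : ℚ) ≠ 0 := by
        have : 0 < τ.count b := Multiset.count_pos.mpr hbτ
        positivity
      field_simp
    rw [Finset.sum_congr rfl inner, ← Finset.sum_smul]
    congr 1
    have : ∑ b ∈ τ.toFinset, (b.1 : ℚ) * (b.2 : ℚ) * (τ.count b : ℚ)
        = ((wtT τ : ℕ) : ℚ) := by
      unfold wtT
      rw [Finset.sum_multiset_map_count, Nat.cast_sum]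
      refine Finset.sum_congr rfl fun b _ => ?_
      rw [smul_eq_mul]
      push_cast
      ring
    rw [this, hwt]
  rw [step2]
  apply Finset.sum_nbij' (i := fun p => (⟨p.1 ::ₘ p.2, p.1⟩ :
      (_ : Multiset (ℕ+ × ℕ+)) × (ℕ+ × ℕ+)))
    (j := fun q => (⟨q.2, q.1.erase q.2⟩ : (_ : ℕ+ × ℕ+) × Multiset (ℕ+ × ℕ+)))
  · rintro ⟨b, σ⟩ hp
    simp only [Finset.mem_sigma] at hp ⊢
    obtain ⟨hb, hσ⟩ := hp
    have hkm : (b.1 : ℕ) * (b.2 : ℕ) ≤ d := (mem_Bfin hd).mp hb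
    have hσw : wtT σ = d - (b.1 : ℕ) * (b.2 : ℕ) := mem_Tfin.mp hσ
    constructor
    · rw [mem_Tfin, wtT_cons, hσw]
      omega
    · exact Multiset.mem_toFinset.mpr (Multiset.mem_cons_self _ _)
  · rintro ⟨τ, b⟩ hq
    simp only [Finset.mem_sigma] at hq ⊢
    obtain ⟨hτ, hb⟩ := hq
    have hbτ : b ∈ τ := Multiset.mem_toFinset.mp hb
    have hwt : wtT τ = d := mem_Tfin.mp hτ
    have hkm : (b.1 : ℕ) * (b.2 : ℕ) ≤ d := hwt ▸ mem_wt_le hbτ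
    constructor
    · exact (mem_Bfin hd).mpr hkm
    · rw [mem_Tfin]
      have : wtT τ = (b.1 : ℕ) * (b.2 : ℕ) + wtT (τ.erase b) := by
        conv_lhs => rw [← Multiset.cons_erase hbτ]
        exact wtT_cons _ _
      omega
  · rintro ⟨b, σ⟩ _
    simp only
    congr 1
    exact Multiset.erase_cons_head _ _
  · rintro ⟨τ, b⟩ hq
    simp only [Finset.mem_sigma] at hq
    have hbτ : b ∈ τ := Multiset.mem_toFinset.mp hq.2
    simp only
    congr 1
    exact Multiset.cons_erase hbτ
  · rintro ⟨b, σ⟩ _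
    simp only [Multiset.erase_cons_head]

lemma HH_eq : ∀ d : ℕ, HH d = ∑ τ ∈ Tfin d, (zT τ)⁻¹ • pTr τ 1 := by
  intro d
  induction d using Nat.strong_induction_on with
  | _ d ih =>
    rcases Nat.eq_zero_or_pos d with rfl | hd
    · have hT : Tfin 0 = {(0 : Multiset (ℕ+ × ℕ+))} := by
        ext τ
        rw [mem_Tfin, Finset.mem_singleton]
        constructor
        · exact wtT_eq_zero
        · rintro rfl; rfl
      rw [hT, Finset.sum_singleton, zT_zero, pTr_zero, inv_one, one_smul]
      funext e
      show (if wdeg e = 0 then (1:ℚ) else 0) = MvPowerSeries.coeff e 1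
      rw [MvPowerSeries.coeff_one]
      refine if_congr ⟨wdeg_eq_zero, ?_⟩ rfl rfl
      rintro rfl
      rfl
    · have hdq : ((d : ℚ)) ≠ 0 := by positivity
      have hrec := HH_rec d hd
      have hstep : ∀ b ∈ Bfin d, (b.1 : ℚ) • (pIn b.1 b.2 * HH (d - (b.1 : ℕ) * (b.2 : ℕ)))
          = (b.1 : ℚ) • (pIn b.1 b.2 *
              ∑ σ ∈ Tfin (d - (b.1 : ℕ) * (b.2 : ℕ)), (zT σ)⁻¹ • pTr σ 1) := by
        intro b hb
        have hkm : (b.1 : ℕ) * (b.2 : ℕ) ≤ d := (mem_Bfin hd).mp hb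
        have hpos : 0 < (b.1 : ℕ) * (b.2 : ℕ) := Nat.mul_pos b.1.pos b.2.pos
        rw [ih _ (by omega)]
      rw [Finset.sum_congr rfl hstep, key_sum d hd] at hrec
      calc HH d = ((d : ℚ)⁻¹ * (d : ℚ)) • HH d := by rw [inv_mul_cancel₀ hdq, one_smul]
        _ = (d : ℚ)⁻¹ • ((d : ℚ) • HH d) := mul_smul _ _ _
        _ = (d : ℚ)⁻¹ • ((d : ℚ) • ∑ τ ∈ Tfin d, (zT τ)⁻¹ • pTr τ 1) := by rw [hrec]
        _ = ∑ τ ∈ Tfin d, (zT τ)⁻¹ • pTr τ 1 := by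
            rw [← mul_smul, inv_mul_cancel₀ hdq, one_smul]

lemma powSub_pTr {r : ℕ} (hr : 0 < r) (τ : Multiset (ℕ+ × ℕ+)) :
    powSub r (pTr τ 1) = pTr τ r := by
  induction τ using Multiset.induction_on with
  | empty => rw [pTr_zero, pTr_zero, powSub_one hr]
  | cons b τ ih =>
    rw [pTr_cons, pTr_cons, powSub_mul hr, ih, powSub_pIn hr, one_mul]

lemma powSub_sum {r : ℕ} {ι : Type*} (s : Finset ι) (F : ι → MvPowerSeries (ℕ+ × ℕ) ℚ)
    (c : ι → ℚ) :
    powSub r (∑ i ∈ s, c i • F i) = ∑ i ∈ s, c i • powSub r (F i) := by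
  funext e
  have hR : (∑ i ∈ s, c i • powSub r (F i)) e = ∑ i ∈ s, c i * (powSub r (F i)) e := by
    exact map_sum (MvPowerSeries.coeff e) (fun i => c i • powSub r (F i)) s
  have hs : ∀ (a : ℕ+ × ℕ →₀ ℕ), (∑ i ∈ s, c i • F i) a = ∑ i ∈ s, c i * F i a := by
    intro a
    exact map_sum (MvPowerSeries.coeff a) (fun i => c i • F i) s
  show (if ∀ v, r ∣ e v then (∑ i ∈ s, c i • F i) (e.mapRange _ _) else 0) = _
  rw [hR]
  by_cases he : ∀ v, r ∣ e v
  · rw [if_pos he, hs]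
    refine Finset.sum_congr rfl fun i _ => ?_
    congr 1
    show _ = powSub r (F i) e
    unfold powSub
    rw [if_pos he]
  · rw [if_neg he]
    symm
    refine Finset.sum_eq_zero fun i _ => ?_
    have : (powSub r (F i)) e = 0 := by
      unfold powSub
      rw [if_neg he]
    rw [this, mul_zero]


/-- For positive integers `d, r`:
`H_{d^r} = Σ_{τ ⊩ d} p^⊗_{τ^r} / z^⊗_τ`, the sum over all types `τ` of weight `d`. -/
theorem H_block_in_pTensor (d r : ℕ) (hd : 0 < d) (hr : 0 < r) :
    powSub r (HH d)
      = ∑ᶠ τ : {τ : Multiset (ℕ+ × ℕ+) // wtT τ = d}, (zT τ.1)⁻¹ • pTr τ.1 r := by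
  haveI : Fintype {τ : Multiset (ℕ+ × ℕ+) // wtT τ = d} := (Tfinite d).fintype
  rw [finsum_eq_sum_of_fintype]
  rw [← Finset.sum_subtype (Tfin d) (fun τ => mem_Tfin)
    (fun τ => (zT τ)⁻¹ • pTr τ r)]
  rw [HH_eq d, powSub_sum]
  refine Finset.sum_congr rfl fun τ _ => ?_
  rw [powSub_pTr hr]
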